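/- Let k ≥ k' ≥ 0 be integers with k ≥ 1, and let G be a graph on n vertices with maximum degree Δ(G) ≤ k−1 and at least k'·n/2 + 3k³ edges, where n ≥ 3k³. Assume that the Erdős–Sós conjecture holds for every tree on at most k'+2 vertices. Then for every integer N with 1 ≤ N ≤ 2k and every choice of trees T₁, …, T_N each having at most k'+2 vertices, G contains pairwise vertex-disjoint copies of T₁, …, T_N (i.e., G contains the disjoint union T₁ ∪ ⋯ ∪ T_N as a subgraph). -/

import Mathlib

/-- The Erdős–Sós conjecture holds for the tree `T'`: every graph on `N` vertices with
more than `(|T'|-2)·N/2` edges contains a copy of `T'`. -/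
def ErdosSosProperty {m : ℕ} (T' : SimpleGraph (Fin m)) : Prop :=
  ∀ (N : ℕ) (G : SimpleGraph (Fin N)),
    2 * G.edgeSet.ncard > (m - 2) * N → ∃ f : T' →g G, Function.Injective f

lemma exists_adj_of_connected {V : Type*} [Fintype V] {G : SimpleGraph V} (hG : G.Connected)
    (h2 : 2 ≤ Fintype.card V) (a : V) : ∃ b, G.Adj a b := by
  obtain ⟨b, hb⟩ := Fintype.exists_ne_of_one_lt_card h2 a
  obtain ⟨p⟩ := hG.preconnected a b
  cases p with
  | nil => exact absurd rfl hb.symm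
  | cons h p => exact ⟨_, h⟩

lemma edge_count_restrict {n : ℕ} (G H : SimpleGraph (Fin n)) (S : Finset (Fin n)) (k : ℕ)
    (hH : ∀ a b, H.Adj a b ↔ G.Adj a b ∧ a ∉ S ∧ b ∉ S)
    (hmax : ∀ v : Fin n, (G.neighborSet v).ncard ≤ k - 1) :
    G.edgeSet.ncard ≤ H.edgeSet.ncard + S.card * (k - 1) := by
  classical
  have hdeg : ∀ v, G.degree v ≤ k - 1 := by
    intro v
    rw [← SimpleGraph.card_neighborSet_eq_degree]
    have := hmax v
    rwa [Set.ncard_eq_toFinset_card', Set.toFinset_card] at this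
  have hle : H ≤ G := fun {a b} hab => ((hH a b).1 hab).1
  have hsub : H.edgeFinset ⊆ G.edgeFinset := SimpleGraph.edgeFinset_mono hle
  have hsdiff : G.edgeFinset \ H.edgeFinset ⊆ S.biUnion (fun v => G.incidenceFinset v) := by
    intro e he
    rw [Finset.mem_sdiff] at he
    induction e with
    | _ a b =>
      rw [SimpleGraph.mem_edgeFinset, SimpleGraph.mem_edgeSet] at he
      obtain ⟨hab, hnH⟩ := he
      have hns : ¬ H.Adj a b := fun h => hnH (SimpleGraph.mem_edgeFinset.2 h)
      rw [hH] at hns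
      push_neg at hns
      rcases Classical.em (a ∈ S) with hA | hA
      · refine Finset.mem_biUnion.2 ⟨a, hA, ?_⟩
        rw [SimpleGraph.mem_incidenceFinset]
        exact ⟨hab, Sym2.mem_mk_left a b⟩
      · refine Finset.mem_biUnion.2 ⟨b, hns hab hA, ?_⟩
        rw [SimpleGraph.mem_incidenceFinset]
        exact ⟨hab, Sym2.mem_mk_right a b⟩
  have h1 : (G.edgeFinset \ H.edgeFinset).card ≤ S.card * (k - 1) := by
    calc (G.edgeFinset \ H.edgeFinset).card ≤ (S.biUnion (fun v => G.incidenceFinset v)).card :=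
          Finset.card_le_card hsdiff
      _ ≤ ∑ v ∈ S, (G.incidenceFinset v).card := Finset.card_biUnion_le
      _ ≤ ∑ v ∈ S, (k - 1) := Finset.sum_le_sum (fun v _ => by
          rw [SimpleGraph.card_incidenceFinset_eq_degree]; exact hdeg v)
      _ = S.card * (k - 1) := by rw [Finset.sum_const, smul_eq_mul]
  have h2 : G.edgeFinset.card = (G.edgeFinset \ H.edgeFinset).card + H.edgeFinset.card :=
    (Finset.card_sdiff_add_card_eq_card hsub).symm
  have e1 : G.edgeSet.ncard = G.edgeFinset.card := by
    rw [← SimpleGraph.coe_edgeFinset, Set.ncard_coe_finset]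
  have e2 : H.edgeSet.ncard = H.edgeFinset.card := by
    rw [← SimpleGraph.coe_edgeFinset, Set.ncard_coe_finset]
  omega

lemma lemA (k k' n : ℕ) (hk : 2 ≤ k) (hk' : k' ≤ k) (hn : 3 * k ^ 3 ≤ n)
    (G : SimpleGraph (Fin n))
    (hmax : ∀ v : Fin n, (G.neighborSet v).ncard ≤ k - 1)
    (hedges : k' * n + 6 * k ^ 3 ≤ 2 * G.edgeSet.ncard)
    (hES : ∀ (m : ℕ), m ≤ k' + 2 → ∀ (T' : SimpleGraph (Fin m)), T'.IsTree →
      ErdosSosProperty T')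
    (m : ℕ) (hm : m ≤ k' + 2) (T : SimpleGraph (Fin m)) (hT : T.IsTree)
    (S : Finset (Fin n)) (hS : S.card ≤ 2 * k * (k + 2)) :
    ∃ f : Fin m → Fin n, Function.Injective f ∧ (∀ a, f a ∉ S) ∧
      ∀ a b, T.Adj a b → G.Adj (f a) (f b) := by
  classical
  obtain ⟨j, rfl⟩ : ∃ j, k = j + 2 := ⟨k - 2, by omega⟩
  have hm1 : 1 ≤ m := Fin.pos_iff_nonempty.2 hT.isConnected.nonempty
  rcases eq_or_lt_of_le hm1 with hm1' | hm2
  · -- m = 1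
    have hcard : S.card < n := by
      have h2 : 2 * (j+2) * ((j+2) + 2) < 3 * (j+2) ^ 3 := by nlinarith [j.zero_le, sq_nonneg j, Nat.pow_le_pow_left j.zero_le 3]
      omega
    have : ∃ x : Fin n, x ∉ S := by
      by_contra h
      push_neg at h
      have : (Finset.univ : Finset (Fin n)) ⊆ S := fun x _ => h x
      have := Finset.card_le_card this
      simp at this
      omega
    obtain ⟨x, hx⟩ := this
    subst hm1'
    refine ⟨fun _ => x, fun a b _ => Subsingleton.elim a b, fun _ => hx, ?_⟩
    intro a b hab
    have hab' : a = b := Subsingleton.elim a b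
    exact absurd (hab' ▸ hab) (T.irrefl)
  · -- 2 ≤ m
    set H : SimpleGraph (Fin n) :=
      { Adj := fun a b => G.Adj a b ∧ a ∉ S ∧ b ∉ S
        symm := ⟨fun a b h => ⟨h.1.symm, h.2.2, h.2.1⟩⟩
        loopless := ⟨fun a h => G.irrefl h.1⟩ } with hHdef
    have hHadj : ∀ a b, H.Adj a b ↔ G.Adj a b ∧ a ∉ S ∧ b ∉ S := fun a b => Iff.rfl
    have hcount := edge_count_restrict G H S (j+2) hHadj hmax
    have hbig : 2 * H.edgeSet.ncard > (m - 2) * n := by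
      have h1 : (m - 2) * n ≤ k' * n := Nat.mul_le_mul_right n (by omega)
      have h2 : 2 * (S.card * ((j+2) - 1)) < 6 * (j+2) ^ 3 := by
        have hp : S.card * ((j+2)-1) ≤ (2*(j+2)*((j+2)+2)) * ((j+2)-1) := Nat.mul_le_mul_right _ hS
        have hkk : 2 * ((2*(j+2)*((j+2)+2)) * ((j+2)-1)) < 6 * (j+2) ^ 3 := by
          have he : (j+2) - 1 = j + 1 := by omega
          rw [he]
          nlinarith [j.zero_le, sq_nonneg j]
        omega
      omega
    obtain ⟨f, hfinj⟩ := hES m hm T hT n H hbig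
    have hadjT : ∀ a : Fin m, ∃ b, T.Adj a b := by
      intro a
      apply exists_adj_of_connected hT.isConnected
      simpa [Nat.succ_le_iff] using hm2
    have hnotS : ∀ a : Fin m, f a ∉ S := by
      intro a
      obtain ⟨b, hab⟩ := hadjT a
      exact (f.map_adj hab).2.1
    exact ⟨f, hfinj, hnotS, fun a b hab => (f.map_adj hab).1⟩

lemma lemB (k k' n : ℕ) (hk : 2 ≤ k) (hk' : k' ≤ k) (hn : 3 * k ^ 3 ≤ n)
    (G : SimpleGraph (Fin n))
    (hmax : ∀ v : Fin n, (G.neighborSet v).ncard ≤ k - 1)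
    (hedges : k' * n + 6 * k ^ 3 ≤ 2 * G.edgeSet.ncard)
    (hES : ∀ (m : ℕ), m ≤ k' + 2 → ∀ (T' : SimpleGraph (Fin m)), T'.IsTree →
      ErdosSosProperty T') :
    ∀ (N : ℕ) (m : Fin N → ℕ) (T : ∀ i, SimpleGraph (Fin (m i))),
    (∀ i, (T i).IsTree) → (∀ i, m i ≤ k' + 2) →
    ∀ S : Finset (Fin n), S.card + N * (k + 2) ≤ 2 * k * (k + 2) →
    ∃ f : (Σ i, Fin (m i)) → Fin n, Function.Injective f ∧ (∀ s, f s ∉ S) ∧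
      ∀ i a b, (T i).Adj a b → G.Adj (f ⟨i, a⟩) (f ⟨i, b⟩) := by
  intro N
  induction N with
  | zero =>
    intro m T _ _ S _
    exact ⟨fun s => s.1.elim0, fun s => s.1.elim0, fun s => s.1.elim0, fun i => i.elim0⟩
  | succ N ih =>
    intro m T hT hm S hS
    obtain ⟨g, hginj, hgS, hgadj⟩ := lemA k k' n hk hk' hn G hmax hedges hES
      (m 0) (hm 0) (T 0) (hT 0) S (by omega)
    set S' : Finset (Fin n) := S ∪ Finset.image g Finset.univ with hS'def
    have hS'card : S'.card + N * (k + 2) ≤ 2 * k * (k + 2) := by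
      have h1 : S'.card ≤ S.card + (Finset.image g Finset.univ).card := Finset.card_union_le _ _
      have h2 : (Finset.image g Finset.univ).card ≤ m 0 := by
        calc (Finset.image g Finset.univ).card ≤ (Finset.univ : Finset (Fin (m 0))).card :=
              Finset.card_image_le
          _ = m 0 := by simp
      have h3 : m 0 ≤ k + 2 := le_trans (hm 0) (by omega)
      have hx : (N+1)*(k+2) = N*(k+2) + (k+2) := by ring
      omega
    obtain ⟨f', hf'inj, hf'S, hf'adj⟩ := ih (fun j => m j.succ) (fun j => T j.succ)
      (fun j => hT j.succ) (fun j => hm j.succ) S' hS'card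
    set F : ∀ i : Fin (N+1), Fin (m i) → Fin n :=
      Fin.cases g (fun j a => f' ⟨j, a⟩) with hFdef
    have hF0 : ∀ a, F 0 a = g a := fun a => by simp [hFdef]
    have hFs : ∀ (j : Fin N) (a : Fin (m j.succ)), F j.succ a = f' ⟨j, a⟩ := fun j a => by
      simp [hFdef]
    have hFnotimage : ∀ (j : Fin N) (a : Fin (m j.succ)) (b : Fin (m 0)), f' ⟨j, a⟩ ≠ g b := by
      intro j a b h
      apply hf'S ⟨j, a⟩
      rw [hS'def]
      exact Finset.mem_union_right _ (Finset.mem_image.2 ⟨b, Finset.mem_univ b, h.symm⟩)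
    refine ⟨fun s => F s.1 s.2, ?_, ?_, ?_⟩
    · rintro ⟨i, a⟩ ⟨i', a'⟩ h
      simp only at h
      induction i using Fin.cases with
      | zero =>
        induction i' using Fin.cases with
        | zero =>
          rw [hF0, hF0] at h
          exact congrArg _ (hginj h)
        | succ j' =>
          rw [hF0, hFs] at h
          exact absurd h.symm (hFnotimage j' a' a)
      | succ j =>
        induction i' using Fin.cases with
        | zero =>
          rw [hFs, hF0] at h
          exact absurd h (hFnotimage j a a')
        | succ j' =>
          rw [hFs, hFs] at h
          have := hf'inj h
          exact congrArg (fun s : (Σ j : Fin N, Fin (m j.succ)) =>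
            (⟨s.1.succ, s.2⟩ : Σ i : Fin (N+1), Fin (m i))) this
    · rintro ⟨i, a⟩
      induction i using Fin.cases with
      | zero => show F 0 a ∉ S; rw [hF0]; exact hgS a
      | succ j =>
        show F j.succ a ∉ S
        rw [hFs]
        intro hmem
        exact hf'S ⟨j, a⟩ (by rw [hS'def]; exact Finset.mem_union_left _ hmem)
    · intro i a b hab
      induction i using Fin.cases with
      | zero =>
        show G.Adj (F 0 a) (F 0 b)
        rw [hF0, hF0]
        exact hgadj a b hab
      | succ j =>
        show G.Adj (F j.succ a) (F j.succ b)
        rw [hFs, hFs]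
        exact hf'adj j a b hab

theorem stmt8 (k k' : ℕ) (hk : 1 ≤ k) (hk' : k' ≤ k)
    (n : ℕ) (hn : 3 * k ^ 3 ≤ n)
    (G : SimpleGraph (Fin n))
    (hmax : ∀ v : Fin n, (G.neighborSet v).ncard ≤ k - 1)
    (hedges : k' * n + 6 * k ^ 3 ≤ 2 * G.edgeSet.ncard)
    (hES : ∀ (m : ℕ), m ≤ k' + 2 → ∀ (T' : SimpleGraph (Fin m)), T'.IsTree →
      ErdosSosProperty T')
    (N : ℕ) (hN1 : 1 ≤ N) (hN2 : N ≤ 2 * k)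
    (m : Fin N → ℕ) (T : ∀ i, SimpleGraph (Fin (m i)))
    (htrees : ∀ i, (T i).IsTree) (hm : ∀ i, m i ≤ k' + 2) :
    ∃ f : (Σ i : Fin N, Fin (m i)) → Fin n, Function.Injective f ∧
      ∀ (i : Fin N) (a b : Fin (m i)),
        (T i).Adj a b → G.Adj (f ⟨i, a⟩) (f ⟨i, b⟩) := by
  have hk2 : 2 ≤ k := by
    by_contra h
    have hk1 : k = 1 := by omega
    subst hk1
    have hempty : G.edgeSet = ∅ := by
      ext e
      induction e with
      | _ a b =>
        simp only [SimpleGraph.mem_edgeSet, Set.mem_empty_iff_false, iff_false]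
        intro hab
        have h1 := hmax a
        have h2 : b ∈ G.neighborSet a := hab
        have h3 : (G.neighborSet a).ncard = 0 := by omega
        rw [Set.ncard_eq_zero (Set.toFinite _)] at h3
        rw [h3] at h2
        exact h2
    rw [hempty, Set.ncard_empty] at hedges
    norm_num at hedges
  have hcard : (∅ : Finset (Fin n)).card + N * (k + 2) ≤ 2 * k * (k + 2) := by
    have := Nat.mul_le_mul_right (k + 2) hN2
    simpa using this
  obtain ⟨f, hinj, _, hadj⟩ := lemB k k' n hk2 hk' hn G hmax hedges hES N m T htrees hm ∅ hcard
  exact ⟨f, hinj, hadj⟩
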